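/- Let F̂(η) = (1/t) log f(w_{t,η}) be the log-transformed meta objective. Then F̂ is differentiable on [0,∞) with F̂'(η) = (−2 Σ_{i=1}^d c_i² λ_i² (1 − ηλ_i)^{2t−1}) / (Σ_{i=1}^d c_i² λ_i (1 − ηλ_i)^{2t}), and the denominator is strictly positive for every η ≥ 0. Moreover F̂ has exactly one stationary point η* on [0,∞), which is its unique minimizer on [0,∞); F̂'(η) < 0 for all η ∈ [0, η*), F̂'(η) > 0 for all η ∈ (η*, ∞), and 1/L ≤ η* ≤ 1/α. -/

import Mathlib

/-- The log-transformed meta objective `F̂(η) = (1/t) log f(w_{t,η})` is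
differentiable on `[0,∞)` with derivative
`F̂'(η) = (−2 Σᵢ cᵢ² λᵢ² (1 − ηλᵢ)^{2t−1}) / (Σᵢ cᵢ² λᵢ (1 − ηλᵢ)^{2t})`, the denominator being
strictly positive for every `η ≥ 0`.  Moreover `F̂` has exactly one stationary point `η*` on
`[0,∞)`, which is its unique minimizer there; `F̂' < 0` on `[0,η*)`, `F̂' > 0` on `(η*,∞)`,
and `1/L ≤ η* ≤ 1/α`. -/
theorem stmt2 (d t : ℕ) (hd : 2 ≤ d) (ht : 1 ≤ t)
    (lam c : Fin d → ℝ)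
    (hpos : ∀ i, 0 < lam i)
    (hdec : ∀ i j : Fin d, i ≤ j → lam j ≤ lam i)
    (L α : ℝ)
    (hLdef : L = lam ⟨0, by omega⟩)
    (hadef : α = lam ⟨d - 1, by omega⟩)
    (hgap : α < L)
    (hcnorm : ∑ i, c i ^ 2 = 1)
    (cmin : ℝ)
    (hcmindef : cmin = min |c ⟨0, by omega⟩| |c ⟨d - 1, by omega⟩|)
    (hcmin : 0 < cmin)
    (F : ℝ → ℝ)
    (hF : ∀ η : ℝ,
      F η = (1 / (t : ℝ)) *
        Real.log ((1 / 2) * ∑ i, c i ^ 2 * lam i * (1 - η * lam i) ^ (2 * t))) :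
    (∀ η : ℝ, 0 ≤ η →
        (0 < ∑ i, c i ^ 2 * lam i * (1 - η * lam i) ^ (2 * t)) ∧
        HasDerivAt F
          ((-2 * ∑ i, c i ^ 2 * lam i ^ 2 * (1 - η * lam i) ^ (2 * t - 1)) /
            (∑ i, c i ^ 2 * lam i * (1 - η * lam i) ^ (2 * t))) η)
    ∧ ∃ ηstar : ℝ,
        (1 / L ≤ ηstar ∧ ηstar ≤ 1 / α) ∧
        deriv F ηstar = 0 ∧
        (∀ η : ℝ, 0 ≤ η → deriv F η = 0 → η = ηstar) ∧
        (∀ η : ℝ, 0 ≤ η → η ≠ ηstar → F ηstar < F η) ∧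
        (∀ η : ℝ, 0 ≤ η → η < ηstar → deriv F η < 0) ∧
        (∀ η : ℝ, ηstar < η → 0 < deriv F η) := by
  -- setup
  set i0 : Fin d := ⟨0, by omega⟩ with hi0
  set i1 : Fin d := ⟨d - 1, by omega⟩ with hi1
  have hc0 : c i0 ≠ 0 := by
    have : 0 < |c i0| := lt_of_lt_of_le hcmin (by rw [hcmindef]; exact min_le_left _ _)
    exact abs_pos.mp this
  have hc1 : c i1 ≠ 0 := by
    have : 0 < |c i1| := lt_of_lt_of_le hcmin (by rw [hcmindef]; exact min_le_right _ _)
    exact abs_pos.mp this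
  have hL : L = lam i0 := hLdef
  have ha : α = lam i1 := hadef
  have hLpos : 0 < L := hL ▸ hpos i0
  have hapos : 0 < α := ha ▸ hpos i1
  have hlamle : ∀ i, lam i ≤ L := fun i => hL ▸ hdec i0 i (by simp [hi0, Fin.le_def])
  have hlamge : ∀ i, α ≤ lam i := fun i => ha ▸ hdec i i1 (by
    simp only [hi1, Fin.le_def]; omega)
  have hodd : Odd (2 * t - 1) := ⟨t - 1, by omega⟩
  have heven : Even (2 * t) := even_two_mul t
  set g : ℝ → ℝ := fun η => ∑ i, c i ^ 2 * lam i * (1 - η * lam i) ^ (2 * t) with hgdef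
  set N : ℝ → ℝ := fun η => ∑ i, c i ^ 2 * lam i ^ 2 * (1 - η * lam i) ^ (2 * t - 1) with hNdef
  -- g is positive everywhere
  have hg : ∀ η : ℝ, 0 < g η := by
    intro η
    apply Finset.sum_pos'
    · intro i _
      have h1 := heven.pow_nonneg (1 - η * lam i)
      have h2 : (0:ℝ) ≤ c i ^ 2 * lam i := by have := hpos i; positivity
      exact mul_nonneg h2 h1
    · by_cases h : 1 - η * lam i0 = 0
      · refine ⟨i1, Finset.mem_univ _, ?_⟩
        have hne : 1 - η * lam i1 ≠ 0 := by
          intro h1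
          have hη : η * lam i0 = 1 := by linarith
          have hη1 : η * lam i1 = 1 := by linarith
          have : lam i1 < lam i0 := by rw [← ha, ← hL]; exact hgap
          nlinarith [hpos i0, hpos i1]
        have := heven.pow_pos hne
        have := hpos i1
        positivity
      · refine ⟨i0, Finset.mem_univ _, ?_⟩
        have := heven.pow_pos h
        have := hpos i0
        positivity
  -- derivative of F
  have hFd : ∀ η : ℝ, HasDerivAt F (-2 * N η / g η) η := by
    intro η
    have hgd : HasDerivAt g (-(2 * t) * N η) η := by
      have : HasDerivAt g
          (∑ i, c i ^ 2 * lam i * ((2 * t : ℕ) * (1 - η * lam i) ^ (2 * t - 1) * (-lam i))) η := by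
        apply HasDerivAt.fun_sum
        intro i _
        have h1 : HasDerivAt (fun x : ℝ => 1 - x * lam i) (-lam i) η := by
          simpa using ((hasDerivAt_id η).mul_const (lam i)).const_sub 1
        exact (h1.pow (2 * t)).const_mul _
      convert this using 1
      rw [hNdef, Finset.mul_sum]
      apply Finset.sum_congr rfl
      intro i _
      push_cast
      ring
    have hFeq : F = fun η => (1 / (t : ℝ)) * Real.log ((1 / 2) * g η) := funext hF
    rw [hFeq]
    have hne : (1 / 2 : ℝ) * g η ≠ 0 := by have := hg η; positivity
    have hlog : HasDerivAt (fun η => Real.log ((1 / 2) * g η))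
        ((1 / 2 * (-(2 * t) * N η)) / ((1 / 2) * g η)) η :=
      (hgd.const_mul (1 / 2 : ℝ)).log hne
    have := hlog.const_mul (1 / (t : ℝ))
    refine this.congr_deriv ?_
    have htne : (t : ℝ) ≠ 0 := by positivity
    have hgne : g η ≠ 0 := (hg η).ne'
    field_simp
  -- N is strictly antitone
  have hNanti : StrictAnti N := by
    intro a b hab
    apply Finset.sum_lt_sum
    · intro i _
      have h1 : 1 - b * lam i ≤ 1 - a * lam i := by nlinarith [hpos i]
      have := (hodd.strictMono_pow (R := ℝ)).monotone h1
      have h2 : 0 ≤ c i ^ 2 * lam i ^ 2 := by positivity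
      exact mul_le_mul_of_nonneg_left this h2
    · refine ⟨i0, Finset.mem_univ _, ?_⟩
      have h1 : 1 - b * lam i0 < 1 - a * lam i0 := by nlinarith [hpos i0]
      have := hodd.strictMono_pow (R := ℝ) h1
      have h2 : 0 < c i0 ^ 2 * lam i0 ^ 2 := by
        have := hpos i0; positivity
      exact mul_lt_mul_of_pos_left this h2
  -- N continuous
  have hNcont : Continuous N := by
    apply continuous_finset_sum
    intro i _
    exact (continuous_const.mul (((continuous_const.sub
      (continuous_id.mul continuous_const))).pow _))
  -- sign of N at endpoints
  have hN1L : 0 < N (1 / L) := by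
    apply Finset.sum_pos'
    · intro i _
      have h1 : 0 ≤ 1 - 1 / L * lam i := by
        rw [div_mul_eq_mul_div, sub_nonneg, div_le_one hLpos]
        simpa using hlamle i
      have := hodd.pow_nonneg_iff.mpr h1
      positivity
    · refine ⟨i1, Finset.mem_univ _, ?_⟩
      have h1 : 0 < 1 - 1 / L * lam i1 := by
        rw [div_mul_eq_mul_div, sub_pos, div_lt_one hLpos]
        rw [← ha]; simpa using hgap
      have := hodd.pow_pos_iff.mpr h1
      have := hpos i1
      positivity
  have hN1a : N (1 / α) < 0 := by
    have : 0 < -N (1 / α) := by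
      rw [hNdef]
      simp only [← Finset.sum_neg_distrib]
      apply Finset.sum_pos'
      · intro i _
        have h1 : 1 - 1 / α * lam i ≤ 0 := by
          rw [div_mul_eq_mul_div, sub_nonpos, le_div_iff₀ hapos]
          simpa using hlamge i
        have := hodd.pow_nonpos h1
        have h2 : 0 ≤ c i ^ 2 * lam i ^ 2 := by positivity
        nlinarith
      · refine ⟨i0, Finset.mem_univ _, ?_⟩
        have h1 : 1 - 1 / α * lam i0 < 0 := by
          rw [div_mul_eq_mul_div, sub_neg, lt_div_iff₀ hapos]
          rw [← hL]; simpa using hgap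
        have := hodd.pow_neg h1
        have h2 : 0 < c i0 ^ 2 * lam i0 ^ 2 := by have := hpos i0; positivity
        nlinarith
    linarith
  -- existence of the zero of N
  have hLa : 1 / L ≤ 1 / α := by
    apply one_div_le_one_div_of_le hapos (le_of_lt hgap)
  obtain ⟨ηstar, hmem, hNstar⟩ : ∃ x ∈ Set.Icc (1 / L) (1 / α), N x = 0 := by
    have := intermediate_value_Icc' hLa hNcont.continuousOn
      (a := (1 / L)) (b := (1 / α))
    exact this ⟨le_of_lt hN1a, le_of_lt hN1L⟩
  have hderivF : ∀ η : ℝ, deriv F η = -2 * N η / g η := fun η => (hFd η).deriv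
  have hFdiff : Differentiable ℝ F := fun η => (hFd η).differentiableAt
  -- sign of deriv
  have hsign_neg : ∀ η : ℝ, η < ηstar → deriv F η < 0 := by
    intro η hη
    rw [hderivF]
    have hN : 0 < N η := by
      have := hNanti hη
      rw [hNstar] at this; exact this
    exact div_neg_of_neg_of_pos (by linarith) (hg η)
  have hsign_pos : ∀ η : ℝ, ηstar < η → 0 < deriv F η := by
    intro η hη
    rw [hderivF]
    have hN : N η < 0 := by
      have := hNanti hη
      rw [hNstar] at this; exact this
    exact div_pos (by linarith) (hg η)
  constructor
  · exact fun η _ => ⟨hg η, hFd η⟩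
  refine ⟨ηstar, hmem, ?_, ?_, ?_, fun η _ => hsign_neg η, hsign_pos⟩
  · rw [hderivF, hNstar]; simp
  · intro η _ hη
    by_contra hne
    rcases lt_or_gt_of_ne hne with h | h
    · exact absurd hη (hsign_neg η h).ne
    · exact absurd hη (hsign_pos η h).ne'
  · -- minimizer
    intro η hη0 hηne
    rcases lt_or_gt_of_ne hηne with h | h
    · have hanti : StrictAntiOn F (Set.Iic ηstar) := by
        apply strictAntiOn_of_deriv_neg (convex_Iic ηstar) hFdiff.continuous.continuousOn
        intro x hx
        rw [interior_Iic] at hx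
        exact hsign_neg x hx
      exact hanti (Set.mem_Iic.mpr (le_of_lt h)) (Set.mem_Iic.mpr le_rfl) h
    · have hmono : StrictMonoOn F (Set.Ici ηstar) := by
        apply strictMonoOn_of_deriv_pos (convex_Ici ηstar) hFdiff.continuous.continuousOn
        intro x hx
        rw [interior_Ici] at hx
        exact hsign_pos x hx
      exact hmono (Set.mem_Ici.mpr le_rfl) (Set.mem_Ici.mpr (le_of_lt h)) h
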